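/- (Special case of Wilson's lemma on evenly distributed differences) Let q = 6n+1 be a prime power and let ℓ be a 3-subset of F_q such that Δℓ = {1,−1}·T for a set T ⊆ F_q^* having exactly one element in each cyclotomic class of index 3. Then for any set S of representatives for the cosets of {1,−1} in C^3, the family { s·ℓ : s ∈ S } (where s·ℓ = { s·a : a ∈ ℓ }) is an (F_q,3,1)-difference family. -/

import Mathlib

section KaleidoscopeDefs

variable {G V : Type*}

/-- The multiset of differences `x - y` over ordered pairs of distinct elements of `B`. -/
def diffMultiset [AddGroup G] [DecidableEq G] (B : Finset G) : Multiset G :=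
  ((B ×ˢ B).filter fun p => p.1 ≠ p.2).val.map fun p => p.1 - p.2

/-- A `(G, k, lam)`-difference family, given as a multiset of blocks. -/
def IsDiffFamily [AddGroup G] [DecidableEq G] (k lam : ℕ) (𝓕 : Multiset (Finset G)) : Prop :=
  (∀ B ∈ 𝓕, B.card = k) ∧ ∀ g : G, g ≠ 0 → (𝓕.bind diffMultiset).count g = lam

/-- The `j`-th line `{b_j, b_{j+1}, b_{j+3}}` (indices mod 7) of an ordered 7-tuple. -/
def fanoLine [DecidableEq G] (B : Fin 7 → G) (j : Fin 7) : Finset G :=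
  {B j, B (j + 1), B (j + 3)}

/-- A Fano Kaleidoscopic difference family: a family of ordered 7-tuples of distinct
elements such that for each `j` the family of `j`-th lines is a `(G,3,1)`-DF. -/
def IsFKDF [AddGroup G] [DecidableEq G] (𝓕 : Multiset (Fin 7 → G)) : Prop :=
  (∀ B ∈ 𝓕, Function.Injective B) ∧
    ∀ j : Fin 7, IsDiffFamily 3 1 (𝓕.map fun B => fanoLine B j)

/-- The `i`-th line of an ordered 9-tuple `(binf, b_0, …, b_7)`:
`{b_i, b_{i+1}, b_{i+3}}` (indices mod 8) for `0 ≤ i ≤ 7`, and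
`{binf, b_{i-8}, b_{i-4}}` for `8 ≤ i ≤ 11`. -/
def hesseLine [DecidableEq G] (binf : G) (b : Fin 8 → G) (i : Fin 12) : Finset G :=
  if h : (i : ℕ) < 8 then
    {b ⟨i, h⟩, b (⟨i, h⟩ + 1), b (⟨i, h⟩ + 3)}
  else
    {binf, b ⟨(i : ℕ) - 8, by have := i.isLt; omega⟩,
      b (⟨(i : ℕ) - 8, by have := i.isLt; omega⟩ + 4)}

/-- A Hesse Kaleidoscopic difference family: a family of ordered 9-tuples of distinct
elements such that for each `i` the family of `i`-th lines is a `(G,3,1)`-DF. -/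
def IsHKDF [AddGroup G] [DecidableEq G] (𝓕 : Multiset (G × (Fin 8 → G))) : Prop :=
  (∀ B ∈ 𝓕, Function.Injective B.2 ∧ ∀ k, B.1 ≠ B.2 k) ∧
    ∀ i : Fin 12, IsDiffFamily 3 1 (𝓕.map fun B => hesseLine B.1 B.2 i)

/-- The point set of a colored plane given by its (colored) lines. -/
def linesPts [DecidableEq V] {n : ℕ} (L : Fin n → Finset V) : Finset V :=
  Finset.univ.biUnion L

/-- `L` describes a Fano plane with points in `V`, where `L i` is the line colored `c_i`:
7 points, seven 3-element lines, and any two distinct points on exactly one line. -/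
def IsColoredFano [DecidableEq V] (L : Fin 7 → Finset V) : Prop :=
  (linesPts L).card = 7 ∧ (∀ i, (L i).card = 3) ∧
    ∀ x y : V, x ∈ linesPts L → y ∈ linesPts L → x ≠ y →
      ∃! i : Fin 7, x ∈ L i ∧ y ∈ L i

/-- A Fano Kaleidoscope on the point set `V`: a multiset of line-colored Fano planes such
that for all distinct `x y` and every color `i` exactly one plane has `x, y` on its
`c_i`-colored line. -/
def IsFanoKaleidoscope [DecidableEq V] (K : Multiset (Fin 7 → Finset V)) : Prop :=
  (∀ L ∈ K, IsColoredFano L) ∧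
    ∀ x y : V, x ≠ y → ∀ i : Fin 7,
      Multiset.countP (fun L => x ∈ L i ∧ y ∈ L i) K = 1

/-- A `G`-regular Fano Kaleidoscope: a Fano Kaleidoscope with point set `G` invariant
(with colors) under all translations. -/
def IsRegularFK (G : Type*) [AddGroup G] [DecidableEq G]
    (K : Multiset (Fin 7 → Finset G)) : Prop :=
  IsFanoKaleidoscope K ∧ ∀ g : G, K.map (fun L => fun i => (L i).image (· + g)) = K

/-- `L` describes a Hesse plane (an `AG(2,3)`) with points in `V`, where `L i` is the line
colored `c_i`. -/
def IsColoredHesse [DecidableEq V] (L : Fin 12 → Finset V) : Prop :=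
  (linesPts L).card = 9 ∧ (∀ i, (L i).card = 3) ∧
    ∀ x y : V, x ∈ linesPts L → y ∈ linesPts L → x ≠ y →
      ∃! i : Fin 12, x ∈ L i ∧ y ∈ L i

/-- A Hesse Kaleidoscope on the point set `V`. -/
def IsHesseKaleidoscope [DecidableEq V] (K : Multiset (Fin 12 → Finset V)) : Prop :=
  (∀ L ∈ K, IsColoredHesse L) ∧
    ∀ x y : V, x ≠ y → ∀ i : Fin 12,
      Multiset.countP (fun L => x ∈ L i ∧ y ∈ L i) K = 1

/-- A `G`-regular Hesse Kaleidoscope. -/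
def IsRegularHK (G : Type*) [AddGroup G] [DecidableEq G]
    (K : Multiset (Fin 12 → Finset G)) : Prop :=
  IsHesseKaleidoscope K ∧ ∀ g : G, K.map (fun L => fun i => (L i).image (· + g)) = K

/-- An `(H, k, 1)`-difference matrix: a `k × |H|` matrix with entries in `H` such that the
difference of any two distinct rows contains each element of `H` exactly once. -/
def IsDiffMatrix (H : Type*) [AddGroup H] [Fintype H] (k : ℕ)
    (M : Fin k → Fin (Fintype.card H) → H) : Prop :=
  ∀ r s : Fin k, r ≠ s → Function.Bijective fun c => M r c - M s c

/-- A 2-`(v, k, lam)` design (block multiset) on the point set `V`. -/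
def Is2Design [DecidableEq V] (k lam : ℕ) (𝓑 : Multiset (Finset V)) : Prop :=
  (∀ b ∈ 𝓑, b.card = k) ∧
    ∀ x y : V, x ≠ y → Multiset.countP (fun b => x ∈ b ∧ y ∈ b) 𝓑 = lam

/-- A pairwise balanced design with block sizes in `K` on the point set `V`. -/
def IsPBD [DecidableEq V] (K : Set ℕ) (𝓑 : Multiset (Finset V)) : Prop :=
  (∀ b ∈ 𝓑, b.card ∈ K) ∧
    ∀ x y : V, x ≠ y → Multiset.countP (fun b => x ∈ b ∧ y ∈ b) 𝓑 = 1

/-- Existence of a Fano Kaleidoscope of order `v`. -/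
def ExistsFK (v : ℕ) : Prop :=
  ∃ K : Multiset (Fin 7 → Finset (Fin v)), IsFanoKaleidoscope K

end KaleidoscopeDefs

/-- `x` and `y` lie in the same cyclotomic class of index 3 (coset of the nonzero
cubes). -/
def SameCubeClass {F : Type*} [Field F] (x y : F) : Prop :=
  ∃ c : F, c ≠ 0 ∧ x = y * c ^ 3


section WilsonAux

variable {F : Type} [Field F]

lemma scc_symm' {x y : F} (h : SameCubeClass x y) : SameCubeClass y x := by
  obtain ⟨c, hc, rfl⟩ := h
  exact ⟨c⁻¹, inv_ne_zero hc, by field_simp⟩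

lemma scc_trans' {x y z : F} (h1 : SameCubeClass x y) (h2 : SameCubeClass y z) :
    SameCubeClass x z := by
  obtain ⟨c, hc, rfl⟩ := h1
  obtain ⟨d, hd, rfl⟩ := h2
  exact ⟨d * c, mul_ne_zero hd hc, by ring⟩

lemma diffMultiset_smul [DecidableEq F] (s : F) (hs : s ≠ 0) (B : Finset F) :
    diffMultiset (B.image fun a => s * a) = (diffMultiset B).map fun x => s * x := by
  have hinj : Function.Injective fun a : F => s * a := mul_right_injective₀ hs
  unfold diffMultiset
  have hprod : (((B.image fun a => s * a) ×ˢ (B.image fun a => s * a)).filter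
      fun p => p.1 ≠ p.2)
      = ((B ×ˢ B).filter fun p => p.1 ≠ p.2).image
          (Prod.map (fun a => s * a) (fun a => s * a)) := by
    ext ⟨x, y⟩
    simp only [Finset.mem_filter, Finset.mem_product, Finset.mem_image, Prod.exists,
      Prod.map, Prod.mk.injEq]
    constructor
    · rintro ⟨⟨⟨a, ha, rfl⟩, ⟨b, hb, rfl⟩⟩, hne⟩
      exact ⟨a, b, ⟨⟨ha, hb⟩, fun h => hne (by rw [h])⟩, rfl, rfl⟩
    · rintro ⟨a, b, ⟨⟨ha, hb⟩, hne⟩, rfl, rfl⟩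
      exact ⟨⟨⟨a, ha, rfl⟩, ⟨b, hb, rfl⟩⟩, fun h => hne (hinj h)⟩
  rw [hprod, Finset.image_val_of_injOn, Multiset.map_map, Multiset.map_map]
  · apply Multiset.map_congr rfl
    intro p _
    simp [Prod.map, mul_sub]
  · exact ((Prod.map_injective).2 ⟨hinj, hinj⟩).injOn

lemma exists_rep [Fintype F] [DecidableEq F] {n : ℕ}
    (hF : Fintype.card F = 6 * n + 1)
    (T : Finset F) (hT0 : ∀ t ∈ T, t ≠ 0) (hTcard : T.card = 3)
    (hTclasses : ∀ t ∈ T, ∀ t' ∈ T, t ≠ t' → ¬SameCubeClass t t')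
    (g : F) (hg : g ≠ 0) : ∃ t ∈ T, SameCubeClass g t := by
  classical
  obtain ⟨z, hz⟩ := IsCyclic.exists_generator (α := Fˣ)
  have hz' : ∀ x : Fˣ, ∃ k : ℕ, z ^ k = x := by
    intro x
    have := hz x
    rwa [← mem_powers_iff_mem_zpowers, Submonoid.mem_powers_iff] at this
  set exp : Fˣ → ℕ := fun x => (hz' x).choose with hexpdef
  have hexp : ∀ x, z ^ exp x = x := fun x => (hz' x).choose_spec
  have hord : orderOf z = 6 * n := by
    rw [orderOf_eq_card_of_forall_mem_zpowers hz, Nat.card_eq_fintype_card,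
      Fintype.card_units, hF]
    omega
  have hwd : ∀ a b : ℕ, z ^ a = z ^ b → (a : ZMod 3) = (b : ZMod 3) := by
    intro a b hab
    rw [pow_eq_pow_iff_modEq, hord] at hab
    rw [ZMod.natCast_eq_natCast_iff]
    exact hab.of_dvd ⟨2 * n, by ring⟩
  have h30 : (3 : ZMod 3) = 0 := by decide
  have hbridge : ∀ x y : Fˣ, ((exp x : ZMod 3) = exp y ↔ SameCubeClass (x : F) (y : F)) := by
    intro x y
    constructor
    · intro h
      have h3 : ((exp x + 2 * exp y : ℕ) : ZMod 3) = 0 := by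
        push_cast
        rw [h]
        ring_nf
        simp [h30]
      have hdvd : 3 ∣ exp x + 2 * exp y := (ZMod.natCast_eq_zero_iff _ _).mp h3
      obtain ⟨m, hm⟩ := hdvd
      have h1 : ((z : F)) ^ (3 * m) = (x : F) * (y : F) ^ 2 := by
        have hu : z ^ (3 * m) = x * y ^ 2 := by
          rw [← hm, pow_add, hexp, mul_comm 2 (exp y), pow_mul, hexp]
        calc ((z : F)) ^ (3 * m) = ((z ^ (3 * m) : Fˣ) : F) := by push_cast; rfl
          _ = (x : F) * (y : F) ^ 2 := by rw [hu]; push_cast; rfl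
      have hy : (y : F) ≠ 0 := Units.ne_zero y
      refine ⟨(y : F)⁻¹ * (z : F) ^ m, ?_, ?_⟩
      · exact mul_ne_zero (inv_ne_zero hy) (pow_ne_zero _ (Units.ne_zero z))
      · have e1 : ((y : F)⁻¹ * (z : F) ^ m) ^ 3 = ((y : F)⁻¹) ^ 3 * (z : F) ^ (3 * m) := by
          rw [mul_pow, ← pow_mul, mul_comm m 3]
        rw [e1, h1]
        field_simp
    · rintro ⟨c, hc, h⟩
      have hcu : x = y * (Units.mk0 c hc) ^ 3 := by
        ext; push_cast; exact h
      have hzz : z ^ exp x = z ^ (exp y + exp (Units.mk0 c hc) * 3) := by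
        rw [hexp, pow_add, hexp, pow_mul, hexp, hcu]
      have := hwd _ _ hzz
      rw [this]
      push_cast
      simp [h30]
  set cl : F → ZMod 3 := fun a => if h : a = 0 then 0 else exp (Units.mk0 a h) with hcl
  have hclbridge : ∀ (x y : F), x ≠ 0 → y ≠ 0 → (cl x = cl y ↔ SameCubeClass x y) := by
    intro x y hx hy
    rw [hcl]
    simp only [dif_neg hx, dif_neg hy]
    exact hbridge (Units.mk0 x hx) (Units.mk0 y hy)
  have hinj : Set.InjOn cl T := by
    intro t ht t' ht' h
    by_contra hne
    exact hTclasses t ht t' ht' hne ((hclbridge t t' (hT0 t ht) (hT0 t' ht')).mp h)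
  have hcardim : (T.image cl).card = 3 := by
    rw [Finset.card_image_of_injOn hinj, hTcard]
  have huniv : T.image cl = Finset.univ := by
    apply Finset.eq_univ_of_card
    rw [hcardim]; rfl
  have : cl g ∈ T.image cl := huniv ▸ Finset.mem_univ _
  obtain ⟨t, ht, hte⟩ := Finset.mem_image.mp this
  exact ⟨t, ht, (hclbridge g t hg (hT0 t ht)).mp hte.symm⟩

end WilsonAux

/-- special case of Wilson's lemma on evenly distributed differences:
if `Δℓ = {1,-1}·T` with `T` having exactly one element in each cyclotomic class of
index 3, then `{s·ℓ : s ∈ S}` is an `(F_q,3,1)`-DF for any set `S` of representatives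
of the cosets of `{1,-1}` in the group of nonzero cubes. -/
theorem wilson_evenly_distributed_differences
    (q n : ℕ) (hq : IsPrimePow q) (hqn : q = 6 * n + 1)
    (F : Type) [Field F] [Fintype F] [DecidableEq F] (hcard : Fintype.card F = q)
    (ℓ T : Finset F) (hℓcard : ℓ.card = 3)
    (hT0 : ∀ t ∈ T, t ≠ 0) (hTcard : T.card = 3)
    (hTclasses : ∀ t ∈ T, ∀ t' ∈ T, t ≠ t' → ¬ SameCubeClass t t')
    (hΔ : diffMultiset ℓ = T.val + T.val.map fun t => -t)
    (S : Finset F)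
    (hS1 : ∀ s ∈ S, s ≠ 0 ∧ ∃ c : F, s = c ^ 3)
    (hS2 : ∀ x : F, x ≠ 0 → (∃ c : F, x = c ^ 3) →
      ∃! s, s ∈ S ∧ (x = s ∨ x = -s)) :
    IsDiffFamily 3 1 (S.val.map fun s => ℓ.image fun a => s * a) := by
  classical
  have hq1 : 1 < q := hq.one_lt
  have hn : 0 < n := by omega
  have hSne : ∀ s ∈ S, s ≠ 0 := fun s hs => (hS1 s hs).1
  -- characteristic is not 2
  have h2 : ∀ a : F, a ≠ 0 → a ≠ -a := by
    intro a ha hcontra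
    have h2a : (2 : F) * a = 0 := by linear_combination hcontra
    rcases mul_eq_zero.mp h2a with h | h
    · have hdvd : ringChar F ∣ 2 := by
        have : ((2 : ℕ) : F) = 0 := by push_cast; exact h
        exact (CharP.cast_eq_zero_iff F (ringChar F) 2).mp this
      have hchar2 : ringChar F = 2 := by
        rcases (Nat.dvd_prime Nat.prime_two).mp hdvd with h1 | h1
        · exact absurd h1 (CharP.ringChar_ne_one)
        · exact h1
      have := FiniteField.even_card_iff_char_two.mp hchar2
      rw [hcard, hqn] at this
      omega
    · exact ha h
  constructor
  · intro B hB
    obtain ⟨s, hs, rfl⟩ := Multiset.mem_map.mp hB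
    rw [Finset.card_image_of_injective _ (mul_right_injective₀ (hSne s hs)), hℓcard]
  · intro g hg
    obtain ⟨t, htT, c, hc, hgtc⟩ :=
      exists_rep (by rw [hcard, hqn]) T hT0 hTcard hTclasses g hg
    have ht0 : t ≠ 0 := hT0 t htT
    have hc3 : (c : F) ^ 3 ≠ 0 := pow_ne_zero 3 hc
    obtain ⟨s₀, ⟨hs₀S, hs₀or⟩, huniq⟩ := hS2 (c ^ 3) hc3 ⟨c, rfl⟩
    have hs₀0 : s₀ ≠ 0 := hSne s₀ hs₀S
    have hnegt : -t ∉ T := by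
      intro h
      exact hTclasses t htT (-t) h (h2 t ht0)
        ⟨-1, neg_ne_zero.mpr one_ne_zero, by ring⟩
    have ht_unique : ∀ t' ∈ T, SameCubeClass g t' → t' = t := by
      intro t' ht' hscc
      by_contra hne
      exact hTclasses t' ht' t htT hne (scc_trans' (scc_symm' hscc) ⟨c, hc, hgtc⟩)
    -- membership analysis
    have hmem1 : ∀ s ∈ S, s⁻¹ * g ∈ T → s = s₀ ∧ c ^ 3 = s := by
      intro s hsS ht'
      have hs0 : s ≠ 0 := hSne s hsS
      obtain ⟨d, hd⟩ := (hS1 s hsS).2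
      have hd0 : d ≠ 0 := by rintro rfl; exact hs0 (by simpa using hd)
      have hscc : SameCubeClass g (s⁻¹ * g) :=
        ⟨d, hd0, by rw [← hd]; field_simp⟩
      have heq : s⁻¹ * g = t := ht_unique _ ht' hscc
      have hcs : c ^ 3 = s := by
        have : g = s * t := by rw [← heq]; field_simp
        rw [hgtc] at this
        exact mul_left_cancel₀ ht0 (by linear_combination this)
      exact ⟨huniq s ⟨hsS, Or.inl hcs⟩, hcs⟩
    have hmem2 : ∀ s ∈ S, -(s⁻¹ * g) ∈ T → s = s₀ ∧ c ^ 3 = -s := by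
      intro s hsS ht'
      have hs0 : s ≠ 0 := hSne s hsS
      obtain ⟨d, hd⟩ := (hS1 s hsS).2
      have hd0 : d ≠ 0 := by rintro rfl; exact hs0 (by simpa using hd)
      have hscc : SameCubeClass g (-(s⁻¹ * g)) := by
        refine ⟨-d, neg_ne_zero.mpr hd0, ?_⟩
        have hd3 : (-d) ^ 3 = -s := by rw [hd]; ring
        rw [hd3]
        field_simp
      have heq : -(s⁻¹ * g) = t := ht_unique _ ht' hscc
      have hcs : c ^ 3 = -s := by
        have hgst : g = -s * t := by rw [← heq]; field_simp
        rw [hgtc] at hgst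
        exact mul_left_cancel₀ ht0 (by linear_combination hgst)
      exact ⟨huniq s ⟨hsS, Or.inr hcs⟩, hcs⟩
    -- the count computation
    rw [Multiset.count_bind, Multiset.map_map]
    simp only [Function.comp]
    have hsum : ∀ s ∈ S, Multiset.count g (diffMultiset (ℓ.image fun a => s * a))
        = ((if s⁻¹ * g ∈ T then 1 else 0) + (if -(s⁻¹ * g) ∈ T then 1 else 0)) := by
      intro s hsS
      have hs0 : s ≠ 0 := hSne s hsS
      have hinj : Function.Injective fun a : F => s * a := mul_right_injective₀ hs0
      rw [diffMultiset_smul s hs0 ℓ, hΔ, Multiset.map_add, Multiset.count_add,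
        Multiset.map_map]
      congr 1
      · have hgrep : g = (fun a : F => s * a) (s⁻¹ * g) := by field_simp
        conv_lhs => rw [hgrep]
        rw [Multiset.count_map_eq_count' _ _ hinj]
        by_cases hmem : s⁻¹ * g ∈ T
        · rw [if_pos hmem]
          exact Multiset.count_eq_one_of_mem T.nodup hmem
        · rw [if_neg hmem]
          exact Multiset.count_eq_zero_of_notMem hmem
      · have hinj2 : Function.Injective ((fun a : F => s * a) ∘ fun t : F => -t) :=
          hinj.comp neg_injective
        have hgrep : g = ((fun a : F => s * a) ∘ fun t : F => -t) (-(s⁻¹ * g)) := by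
          simp only [Function.comp_apply, neg_neg]
          field_simp
        conv_lhs => rw [hgrep]
        rw [Multiset.count_map_eq_count' _ _ hinj2]
        by_cases hmem : -(s⁻¹ * g) ∈ T
        · rw [if_pos hmem]
          exact Multiset.count_eq_one_of_mem T.nodup hmem
        · rw [if_neg hmem]
          exact Multiset.count_eq_zero_of_notMem hmem
    calc (Multiset.map
            (fun s => Multiset.count g (diffMultiset (ℓ.image fun a => s * a))) S.val).sum
        = ∑ s ∈ S, Multiset.count g (diffMultiset (ℓ.image fun a => s * a)) := rfl
      _ = ∑ s ∈ S, ((if s⁻¹ * g ∈ T then 1 else 0) + (if -(s⁻¹ * g) ∈ T then 1 else 0)) :=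
          Finset.sum_congr rfl hsum
      _ = 1 := by
          rw [Finset.sum_eq_single_of_mem s₀ hs₀S]
          · rcases hs₀or with h | h
            · have e : s₀⁻¹ * g = t := by
                rw [hgtc, ← h]
                field_simp
              rw [e, if_pos htT, if_neg hnegt]
            · have e : s₀⁻¹ * g = -t := by
                rw [hgtc, h]
                field_simp
              rw [e, if_neg hnegt, neg_neg, if_pos htT]
          · intro b hb hbne
            have h1 : b⁻¹ * g ∉ T := fun hmem => hbne (hmem1 b hb hmem).1
            have h2 : -(b⁻¹ * g) ∉ T := fun hmem => hbne (hmem2 b hb hmem).1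
            rw [if_neg h1, if_neg h2]
            norm_num
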